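/- Let G be an (m,d,γ)-spectral expander on a finite vertex set V with |V| = m, in which any two distinct vertices u, v satisfy |Γ(u) ∩ Γ(v)| ≤ 1, let c : V → {0,1} be a balanced coloring of G, and assume m ≥ 1/γ². Then for every b ∈ {0,1} there exists a (1/10, ⌊2·log₂(1/γ)⌋ − 100)-hitting distribution over the b-monochromatic rectangles of the partial function g(G,c). -/

import Mathlib

open Finset Matrix

/-- `G` (given by its adjacency matrix `M`, a symmetric matrix of natural numbers; a
self-loop at `v` contributes `1` to `M v v` and to the degree of `v`) is an
`(m, d, γ)`-spectral expander: it has `m` vertices, it is `d`-regular, and, viewing `M`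
as a real symmetric matrix, `d` is an eigenvalue of multiplicity `1` and every other
eigenvalue `λ` satisfies `|λ| ≤ γ·d`. -/
def IsSpectralExpander {V : Type*} [Fintype V] [DecidableEq V]
    (M : Matrix V V ℕ) (m d : ℕ) (γ : ℝ) : Prop :=
  Fintype.card V = m ∧
  (∀ v : V, ∑ u : V, M v u = d) ∧
  ∃ hH : (M.map (Nat.cast : ℕ → ℝ)).IsHermitian,
    (∃! i : V, hH.eigenvalues i = (d : ℝ)) ∧
    (∀ i : V, hH.eigenvalues i ≠ (d : ℝ) → |hH.eigenvalues i| ≤ γ * d)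

/-- The set of common neighbors `Γ(u) ∩ Γ(v)` of `u` and `v` in the multigraph with
adjacency matrix `M`. -/
def commonNeighbors {V : Type*} [Fintype V] [DecidableEq V]
    (M : Matrix V V ℕ) (u v : V) : Finset V :=
  Finset.univ.filter (fun w => 1 ≤ M w u ∧ 1 ≤ M w v)

open Finset

/-- The probability, under a distribution `μ` on rectangles `R = R.1 × R.2 ⊆ α × β`,
that the sampled rectangle intersects `X × Y`. -/
noncomputable def hitProb {α β : Type*} [Fintype α] [Fintype β] [DecidableEq α] [DecidableEq β]
    (μ : Finset α × Finset β → ℝ) (X : Finset α) (Y : Finset β) : ℝ :=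
  ∑ R ∈ Finset.univ.filter
      (fun R : Finset α × Finset β => (R.1 ∩ X).Nonempty ∧ (R.2 ∩ Y).Nonempty), μ R

/-- `μ` is a probability distribution on rectangles of `α × β`. -/
def IsDistribution {α β : Type*} [Fintype α] [Fintype β]
    (μ : Finset α × Finset β → ℝ) : Prop :=
  (∀ R, 0 ≤ μ R) ∧ ∑ R, μ R = 1

/-- `μ` is a `(δ, h)`-hitting distribution: every `X × Y` with
`|X| ≥ 2^(−h)·|α|` and `|Y| ≥ 2^(−h)·|β|` is hit with probability at least `1 − δ`. -/
def IsHitting {α β : Type*} [Fintype α] [Fintype β] [DecidableEq α] [DecidableEq β]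
    (μ : Finset α × Finset β → ℝ) (δ : ℝ) (h : ℤ) : Prop :=
  ∀ X : Finset α, ∀ Y : Finset β,
    (2 : ℝ) ^ (-h) * (Fintype.card α : ℝ) ≤ X.card →
    (2 : ℝ) ^ (-h) * (Fintype.card β : ℝ) ≤ Y.card →
    1 - δ ≤ hitProb μ X Y

/-- The coloring `c : V → {0,1}` is balanced: each color class has size at least `|V|/3`,
i.e. `|V|/3 ≤ |c⁻¹(1)| ≤ 2|V|/3`. -/
def BalancedColoring {V : Type*} [Fintype V] (c : V → Bool) : Prop :=
  Fintype.card V ≤ 3 * (Finset.univ.filter (fun v => c v = true)).card ∧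
  3 * (Finset.univ.filter (fun v => c v = true)).card ≤ 2 * Fintype.card V

/-- The rectangle `R = R.1 × R.2` is `b`-monochromatic for the partial function `g(G,c)`:
at every point `(u, v)` of the rectangle, `g(G,c)` is defined (i.e. `u ≠ v` and `u, v`
have a common neighbor) with value `b` (i.e. some common neighbor — which is unique by
assumption — has color `b`). -/
def MonoRectangle {V : Type*} [Fintype V] [DecidableEq V]
    (M : Matrix V V ℕ) (c : V → Bool) (b : Bool) (R : Finset V × Finset V) : Prop :=
  ∀ u ∈ R.1, ∀ v ∈ R.2, u ≠ v ∧ ∃ w ∈ commonNeighbors M u v, c w = b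

set_option maxHeartbeats 1000000 in
/-- Expander mixing lemma, zero-edge corollary. -/
lemma zero_edge_bound {V : Type*} [Fintype V] [DecidableEq V]
    (M : Matrix V V ℕ) (m d : ℕ) (γ : ℝ) (hγ : 0 < γ) (hd : 0 < d)
    (hexp : IsSpectralExpander M m d γ)
    (S T : Finset V) (hST : ∀ s ∈ S, ∀ t ∈ T, M s t = 0) :
    (S.card : ℝ) * T.card ≤ γ^2 * m^2 := by
  obtain ⟨hcard, hreg, hH, hex, hbound⟩ := hexp
  obtain ⟨i₀, hi₀, huniq⟩ := hex
  set A : Matrix V V ℝ := M.map (Nat.cast : ℕ → ℝ) with hA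
  set U : Matrix V V ℝ := (hH.eigenvectorUnitary : Matrix V V ℝ) with hU
  set lam : V → ℝ := hH.eigenvalues with hlam
  -- entry formula
  have hent : ∀ s t, A s t = ∑ j, U s j * lam j * U t j := by
    intro s t
    conv_lhs => rw [hH.spectral_theorem, Unitary.conjStarAlgAut_apply]
    rw [Matrix.mul_apply]
    congr 1; ext j
    rw [Matrix.mul_diagonal]
    simp [hU, hlam, Matrix.star_apply, mul_comm, mul_assoc, mul_left_comm]
  have hUU : U * star U = 1 := (Matrix.mem_unitaryGroup_iff).mp hH.eigenvectorUnitary.2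
  have hUU' : star U * U = 1 := (Matrix.mem_unitaryGroup_iff').mp hH.eigenvectorUnitary.2
  have huu : ∀ s v, ∑ j, U s j * U v j = if s = v then 1 else 0 := by
    intro s v
    have := congrFun (congrFun hUU s) v
    rw [Matrix.mul_apply] at this
    simpa [Matrix.star_apply, Matrix.one_apply] using this
  have huu' : ∀ j k, ∑ s, U s j * U s k = if j = k then 1 else 0 := by
    intro j k
    have := congrFun (congrFun hUU' j) k
    rw [Matrix.mul_apply] at this
    simp only [Matrix.star_apply, star_trivial] at this
    rw [Matrix.one_apply] at this
    exact this
  set σ : Finset V → V → ℝ := fun S j => ∑ s ∈ S, U s j with hσ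
  have hσσ : ∀ S T : Finset V, ∑ j, σ S j * σ T j = ((S ∩ T).card : ℝ) := by
    intro S T
    calc ∑ j, σ S j * σ T j
        = ∑ j, ∑ s ∈ S, ∑ t ∈ T, U s j * U t j := by
          apply Finset.sum_congr rfl; intro j _
          rw [hσ]
          rw [Finset.sum_mul]
          apply Finset.sum_congr rfl; intro s _
          rw [Finset.mul_sum]
      _ = ∑ s ∈ S, ∑ t ∈ T, ∑ j, U s j * U t j := by
          rw [Finset.sum_comm]
          apply Finset.sum_congr rfl; intro s _
          rw [Finset.sum_comm]
      _ = ∑ s ∈ S, ∑ t ∈ T, if s = t then (1:ℝ) else 0 := by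
          apply Finset.sum_congr rfl; intro s _
          apply Finset.sum_congr rfl; intro t _
          exact huu s t
      _ = ∑ s ∈ S, if s ∈ T then (1:ℝ) else 0 := by
          apply Finset.sum_congr rfl; intro s _
          rw [Finset.sum_ite_eq T s (fun _ => (1:ℝ))]
      _ = ((S ∩ T).card : ℝ) := by rw [Finset.sum_ite_mem]; simp
  have hrow : ∀ s, ∑ u, A s u = (d : ℝ) := by
    intro s
    have h := hreg s
    have : ∑ u, A s u = ((∑ u, M s u : ℕ) : ℝ) := by
      rw [Nat.cast_sum]
      apply Finset.sum_congr rfl; intro u _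
      simp [hA, Matrix.map_apply]
    rw [this, h]
  have heig : ∀ j, lam j * σ Finset.univ j = (d : ℝ) * σ Finset.univ j := by
    intro j
    have h1 : ∑ s, U s j * (∑ u, A s u) = (d:ℝ) * σ Finset.univ j := by
      calc ∑ s, U s j * (∑ u, A s u) = ∑ s, U s j * (d:ℝ) := by
            apply Finset.sum_congr rfl; intro s _; rw [hrow s]
        _ = (d:ℝ) * σ Finset.univ j := by rw [hσ, Finset.mul_sum]; apply Finset.sum_congr rfl; intro s _; ring
    have h2 : ∑ s, U s j * (∑ u, A s u) = lam j * σ Finset.univ j := by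
      calc ∑ s, U s j * (∑ u, A s u) = ∑ s, ∑ u, U s j * A s u := by
            apply Finset.sum_congr rfl; intro s _; rw [Finset.mul_sum]
        _ = ∑ u, ∑ s, U s j * A s u := Finset.sum_comm
        _ = ∑ u, lam j * U u j := by
            apply Finset.sum_congr rfl; intro u _
            calc ∑ s, U s j * A s u = ∑ s, ∑ k, U s k * lam k * U u k * U s j := by
                  apply Finset.sum_congr rfl; intro s _
                  rw [hent s u, Finset.mul_sum]
                  apply Finset.sum_congr rfl; intro k _; ring
              _ = ∑ k, ∑ s, U s k * lam k * U u k * U s j := Finset.sum_comm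
              _ = ∑ k, lam k * U u k * (∑ s, U s k * U s j) := by
                  apply Finset.sum_congr rfl; intro k _
                  rw [Finset.mul_sum]
                  apply Finset.sum_congr rfl; intro s _; ring
              _ = ∑ k, lam k * U u k * (if k = j then 1 else 0) := by
                  apply Finset.sum_congr rfl; intro k _; rw [huu' k j]
              _ = lam j * U u j := by simp [mul_ite]
        _ = lam j * σ Finset.univ j := by rw [hσ, Finset.mul_sum]
    rw [← h1, h2]
  have ht0 : ∀ j, j ≠ i₀ → σ Finset.univ j = 0 := by
    intro j hj
    have hne : lam j ≠ (d:ℝ) := fun h => hj (huniq j h)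
    have h := heig j
    have h' : (lam j - (d:ℝ)) * σ Finset.univ j = 0 := by linarith
    rcases mul_eq_zero.mp h' with h'' | h''
    · exact absurd (by linarith : lam j = (d:ℝ)) hne
    · exact h''
  have htm : σ Finset.univ i₀ * σ Finset.univ i₀ = (m : ℝ) := by
    have h1 := hσσ Finset.univ Finset.univ
    rw [Finset.univ_inter, Finset.card_univ, hcard] at h1
    rw [← h1, Finset.sum_eq_single i₀]
    · intro j _ hj; rw [ht0 j hj, mul_zero]
    · intro h; exact absurd (Finset.mem_univ i₀) h
  have hSmain : ∀ S : Finset V, σ S i₀ * σ Finset.univ i₀ = (S.card : ℝ) := by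
    intro S
    have h1 := hσσ S Finset.univ
    rw [Finset.inter_univ] at h1
    rw [← h1, Finset.sum_eq_single i₀]
    · intro j _ hj; rw [ht0 j hj, mul_zero]
    · intro h; exact absurd (Finset.mem_univ i₀) h
  have hE0 : ∑ j, lam j * (σ S j * σ T j) = 0 := by
    have h1 : ∑ s ∈ S, ∑ t ∈ T, A s t = 0 := by
      apply Finset.sum_eq_zero; intro s hs
      apply Finset.sum_eq_zero; intro t ht
      simp [hA, Matrix.map_apply, hST s hs t ht]
    rw [← h1]
    symm
    calc ∑ s ∈ S, ∑ t ∈ T, A s t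
        = ∑ s ∈ S, ∑ t ∈ T, ∑ j, U s j * lam j * U t j := by
          apply Finset.sum_congr rfl; intro s _
          apply Finset.sum_congr rfl; intro t _
          exact hent s t
      _ = ∑ j, ∑ s ∈ S, ∑ t ∈ T, U s j * lam j * U t j := by
          symm
          rw [Finset.sum_comm]
          apply Finset.sum_congr rfl; intro s _
          rw [Finset.sum_comm]
      _ = ∑ j, lam j * (σ S j * σ T j) := by
          apply Finset.sum_congr rfl; intro j _
          rw [hσ]
          simp only [Finset.mul_sum, Finset.sum_mul]
          rw [Finset.sum_comm]
          apply Finset.sum_congr rfl; intro s _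
          apply Finset.sum_congr rfl; intro t _
          ring
  have hsplit : ∑ j, lam j * (σ S j * σ T j)
      = lam i₀ * (σ S i₀ * σ T i₀) + ∑ j ∈ Finset.univ.erase i₀, lam j * (σ S j * σ T j) :=
    (Finset.add_sum_erase Finset.univ _ (Finset.mem_univ i₀)).symm
  set rest := ∑ j ∈ Finset.univ.erase i₀, lam j * (σ S j * σ T j) with hrest
  have hsq : ∀ S : Finset V, ∑ j ∈ Finset.univ.erase i₀, |σ S j|^2 ≤ (S.card : ℝ) := by
    intro S
    have h1 := hσσ S S
    rw [Finset.inter_self] at h1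
    calc ∑ j ∈ Finset.univ.erase i₀, |σ S j|^2 ≤ ∑ j, |σ S j|^2 :=
          Finset.sum_le_sum_of_subset_of_nonneg (Finset.erase_subset _ _)
            (fun j _ _ => sq_nonneg _)
      _ = (S.card : ℝ) := by
          rw [← h1]; apply Finset.sum_congr rfl; intro j _; rw [sq_abs]; ring
  have habs : |rest| ≤ γ * d * Real.sqrt ((S.card:ℝ) * T.card) := by
    have h1 : |rest| ≤ ∑ j ∈ Finset.univ.erase i₀, |σ S j| * |σ T j| * (γ * d) := by
      calc |rest| ≤ ∑ j ∈ Finset.univ.erase i₀, |lam j * (σ S j * σ T j)| :=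
            Finset.abs_sum_le_sum_abs _ _
        _ ≤ ∑ j ∈ Finset.univ.erase i₀, |σ S j| * |σ T j| * (γ * d) := by
            apply Finset.sum_le_sum; intro j hj
            have hne : lam j ≠ (d:ℝ) := fun h => (Finset.mem_erase.mp hj).1 (huniq j h)
            have hb := hbound j hne
            rw [abs_mul, abs_mul]
            calc |lam j| * (|σ S j| * |σ T j|) ≤ γ * d * (|σ S j| * |σ T j|) := by
                  apply mul_le_mul_of_nonneg_right hb
                  positivity
              _ = |σ S j| * |σ T j| * (γ * d) := by ring
    have h2 : ∑ j ∈ Finset.univ.erase i₀, |σ S j| * |σ T j|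
        ≤ Real.sqrt ((S.card:ℝ) * T.card) := by
      have hcs := Finset.sum_mul_sq_le_sq_mul_sq (Finset.univ.erase i₀)
        (fun j => |σ S j|) (fun j => |σ T j|)
      have hle : (∑ j ∈ Finset.univ.erase i₀, |σ S j| * |σ T j|)^2 ≤ (S.card:ℝ) * T.card := by
        calc (∑ j ∈ Finset.univ.erase i₀, |σ S j| * |σ T j|)^2
            ≤ (∑ j ∈ Finset.univ.erase i₀, |σ S j|^2) * ∑ j ∈ Finset.univ.erase i₀, |σ T j|^2 :=
              hcs
          _ ≤ (S.card:ℝ) * T.card := by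
              apply mul_le_mul (hsq S) (hsq T) ?_ (Nat.cast_nonneg _)
              positivity
      have hnn : (0:ℝ) ≤ ∑ j ∈ Finset.univ.erase i₀, |σ S j| * |σ T j| := by positivity
      calc ∑ j ∈ Finset.univ.erase i₀, |σ S j| * |σ T j|
          = Real.sqrt ((∑ j ∈ Finset.univ.erase i₀, |σ S j| * |σ T j|)^2) :=
            (Real.sqrt_sq hnn).symm
        _ ≤ Real.sqrt ((S.card:ℝ) * T.card) := Real.sqrt_le_sqrt hle
    calc |rest| ≤ ∑ j ∈ Finset.univ.erase i₀, |σ S j| * |σ T j| * (γ * d) := h1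
      _ = (∑ j ∈ Finset.univ.erase i₀, |σ S j| * |σ T j|) * (γ * d) := by
          rw [Finset.sum_mul]
      _ ≤ Real.sqrt ((S.card:ℝ) * T.card) * (γ * d) := by
          apply mul_le_mul_of_nonneg_right h2
          positivity
      _ = γ * d * Real.sqrt ((S.card:ℝ) * T.card) := by ring
  have key : (d:ℝ) * (σ S i₀ * σ T i₀) = -rest := by
    have h0 := hE0
    rw [hsplit, hi₀] at h0
    linarith
  have hd' : (0:ℝ) < d := by exact_mod_cast hd
  have hfin : (d:ℝ) * ((S.card:ℝ) * T.card)
      ≤ (d:ℝ) * (γ * Real.sqrt ((S.card:ℝ) * T.card) * m) := by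
    calc (d:ℝ) * ((S.card:ℝ) * T.card)
        = ((d:ℝ) * (σ S i₀ * σ T i₀)) * (σ Finset.univ i₀ * σ Finset.univ i₀) := by
          rw [← hSmain S, ← hSmain T]; ring
      _ = (-rest) * m := by rw [key, htm]
      _ ≤ |rest| * m := mul_le_mul_of_nonneg_right (neg_le_abs rest) (Nat.cast_nonneg m)
      _ ≤ (γ * d * Real.sqrt ((S.card:ℝ) * T.card)) * m :=
          mul_le_mul_of_nonneg_right habs (Nat.cast_nonneg m)
      _ = (d:ℝ) * (γ * Real.sqrt ((S.card:ℝ) * T.card) * m) := by ring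
  have h2 : ((S.card:ℝ) * T.card) ≤ γ * Real.sqrt ((S.card:ℝ) * T.card) * m :=
    le_of_mul_le_mul_left hfin hd'
  have hx0 : (0:ℝ) ≤ (S.card:ℝ) * T.card := by positivity
  nlinarith [Real.sq_sqrt hx0, Real.sqrt_nonneg ((S.card:ℝ) * T.card),
    sq_nonneg (γ * (m:ℝ) - Real.sqrt ((S.card:ℝ) * T.card)), hγ.le, Nat.cast_nonneg (α := ℝ) m]

lemma sum_fiber_card {α β : Type*} [DecidableEq β] [Fintype β] (s : Finset α) (φ : α → β)
    (P : β → Prop) [DecidablePred P] :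
    ∑ R ∈ Finset.univ.filter P, (s.filter (fun a => φ a = R)).card
      = (s.filter (fun a => P (φ a))).card := by
  rw [Finset.card_eq_sum_card_fiberwise
    (f := φ) (t := Finset.univ.filter P)
    (fun a ha => Finset.mem_filter.mpr ⟨Finset.mem_univ _, (Finset.mem_filter.mp ha).2⟩)]
  apply Finset.sum_congr rfl
  intro R hR
  congr 1
  ext a
  constructor
  · intro h
    have h1 := Finset.mem_filter.mp h
    exact Finset.mem_filter.mpr ⟨Finset.mem_filter.mpr
      ⟨h1.1, by rw [h1.2]; exact (Finset.mem_filter.mp hR).2⟩, h1.2⟩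
  · intro h
    have h1 := Finset.mem_filter.mp h
    have h2 := Finset.mem_filter.mp h1.1
    exact Finset.mem_filter.mpr ⟨h2.1, h1.2⟩

lemma count_avoid {V : Type*} [DecidableEq V] (N X : Finset V) :
    ((N.powerset).filter (fun A => A ∩ X = ∅)).card = 2 ^ (N \ X).card := by
  rw [← Finset.card_powerset]
  congr 1
  ext A
  simp only [Finset.mem_filter, Finset.mem_powerset, Finset.subset_sdiff,
    ← Finset.disjoint_iff_inter_eq_empty]

lemma count_contain {V : Type*} [DecidableEq V] (N s : Finset V) (hs : s ⊆ N) :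
    ((N.powerset).filter (fun A => s ⊆ A)).card = 2 ^ (N \ s).card := by
  rw [← Finset.card_powerset]
  apply Finset.card_bij' (fun A _ => A \ s) (fun B _ => B ∪ s)
  · intro A hA
    rw [Finset.mem_filter, Finset.mem_powerset] at hA
    rw [Finset.mem_powerset]
    exact Finset.sdiff_subset_sdiff hA.1 le_rfl
  · intro B hB
    rw [Finset.mem_powerset] at hB
    rw [Finset.mem_filter, Finset.mem_powerset]
    constructor
    · exact Finset.union_subset ((hB.trans (Finset.sdiff_subset))) hs
    · exact Finset.subset_union_right
  · intro A hA
    rw [Finset.mem_filter] at hA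
    rw [Finset.sdiff_union_self_eq_union, Finset.union_eq_left.mpr hA.2]
  · intro B hB
    rw [Finset.mem_powerset] at hB
    have hdisj : Disjoint B s := Finset.disjoint_of_subset_left hB Finset.sdiff_disjoint
    rw [Finset.union_sdiff_right, Finset.sdiff_eq_self_iff_disjoint.mpr hdisj]

lemma success_count {V : Type*} [DecidableEq V] (N X Y : Finset V)
    (hX : 5 ≤ (N ∩ X).card) (hY : 5 ≤ (N ∩ Y).card) :
    (15 : ℝ) / 16 * 2 ^ N.card ≤
      ((N.powerset).filter (fun A => (A ∩ X).Nonempty ∧ ((N \ A) ∩ Y).Nonempty)).card := by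
  classical
  set n := N.card with hn
  have han : (N ∩ X).card ≤ n := Finset.card_le_card Finset.inter_subset_left
  have hbn : (N ∩ Y).card ≤ n := Finset.card_le_card Finset.inter_subset_left
  have hsub : (N.powerset).filter
      (fun A => ¬ ((A ∩ X).Nonempty ∧ ((N \ A) ∩ Y).Nonempty)) ⊆
      (N.powerset).filter (fun A => A ∩ X = ∅) ∪
        (N.powerset).filter (fun A => N ∩ Y ⊆ A) := by
    intro A hA
    rw [Finset.mem_filter] at hA
    obtain ⟨hAp, hAn⟩ := hA
    rw [not_and_or] at hAn
    rw [Finset.mem_union, Finset.mem_filter, Finset.mem_filter]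
    rcases hAn with h | h
    · left; exact ⟨hAp, Finset.not_nonempty_iff_eq_empty.mp h⟩
    · right
      refine ⟨hAp, ?_⟩
      have he := Finset.not_nonempty_iff_eq_empty.mp h
      intro y hy
      rw [Finset.mem_inter] at hy
      by_contra hyA
      have : y ∈ (N \ A) ∩ Y := Finset.mem_inter.mpr ⟨Finset.mem_sdiff.mpr ⟨hy.1, hyA⟩, hy.2⟩
      rw [he] at this
      exact Finset.notMem_empty y this
  have hcnt : ((N.powerset).filter
      (fun A => ¬ ((A ∩ X).Nonempty ∧ ((N \ A) ∩ Y).Nonempty))).card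
      ≤ 2 ^ (n - 5) + 2 ^ (n - 5) := by
    calc ((N.powerset).filter _).card
        ≤ ((N.powerset).filter (fun A => A ∩ X = ∅) ∪
            (N.powerset).filter (fun A => N ∩ Y ⊆ A)).card := Finset.card_le_card hsub
      _ ≤ ((N.powerset).filter (fun A => A ∩ X = ∅)).card +
            ((N.powerset).filter (fun A => N ∩ Y ⊆ A)).card := Finset.card_union_le _ _
      _ = 2 ^ (N \ X).card + 2 ^ (N \ (N ∩ Y)).card := by
          rw [count_avoid, count_contain N (N ∩ Y) Finset.inter_subset_left]
      _ ≤ 2 ^ (n - 5) + 2 ^ (n - 5) := by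
          have e1 : (N \ X).card = n - (N ∩ X).card := by
            have := Finset.card_inter_add_card_sdiff N X
            omega
          have e2 : (N \ (N ∩ Y)).card = n - (N ∩ Y).card := by
            rw [Finset.sdiff_inter_self_left]
            have := Finset.card_inter_add_card_sdiff N Y
            omega
          rw [e1, e2]
          have := Nat.pow_le_pow_right (show 1 ≤ 2 by norm_num)
            (show n - (N ∩ X).card ≤ n - 5 by omega)
          have := Nat.pow_le_pow_right (show 1 ≤ 2 by norm_num)
            (show n - (N ∩ Y).card ≤ n - 5 by omega)
          omega
  have htot := Finset.card_filter_add_card_filter_not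
    (s := N.powerset) (p := fun A => (A ∩ X).Nonempty ∧ ((N \ A) ∩ Y).Nonempty)
  rw [Finset.card_powerset] at htot
  rw [← hn] at htot
  have hk : n = (n - 5) + 5 := by omega
  have hpow : (2:ℕ) ^ n = 2 ^ (n - 5) * 32 := by
    rw [hk]; rw [pow_add]; norm_num
  have h1 : (2:ℕ) ^ (n-5) * 32 ≤ ((N.powerset).filter
      (fun A => (A ∩ X).Nonempty ∧ ((N \ A) ∩ Y).Nonempty)).card + 2 ^ (n-5) * 2 := by
    omega
  have h2 : (30:ℝ) * 2 ^ (n-5) ≤ ((N.powerset).filter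
      (fun A => (A ∩ X).Nonempty ∧ ((N \ A) ∩ Y).Nonempty)).card := by
    have := h1
    have hcast : ((2:ℕ) ^ (n-5) * 32 : ℝ) ≤
        (((N.powerset).filter (fun A => (A ∩ X).Nonempty ∧ ((N \ A) ∩ Y).Nonempty)).card : ℝ)
          + (2:ℝ) ^ (n-5) * 2 := by
      exact_mod_cast Nat.cast_le.mpr h1
    push_cast at hcast
    linarith
  calc (15 : ℝ) / 16 * 2 ^ n = 15 / 16 * (2 ^ (n-5) * 32) := by
        rw [show ((2:ℝ) ^ n = 2 ^ (n-5) * 32) by exact_mod_cast congrArg (Nat.cast : ℕ → ℝ) hpow]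
    _ = 30 * 2 ^ (n-5) := by ring
    _ ≤ _ := h2

lemma partition_five {V : Type*} [DecidableEq V] (X : Finset V) (h24 : 24 ≤ X.card) :
    ∃ P : Fin 5 → Finset V, (∀ i, P i ⊆ X) ∧ (∀ i, (X.card : ℝ) ≤ 6 * (P i).card) ∧
      (∀ x ∈ X, ∃ i, x ∈ P i) ∧ (∀ i j, i ≠ j → Disjoint (P i) (P j)) := by
  classical
  set n := X.card with hn
  set k := n / 5 with hk
  obtain ⟨P0, h0s, h0c⟩ := Finset.exists_subset_card_eq (show k ≤ X.card by omega)
  have hc1 : (X \ P0).card = n - k := by rw [Finset.card_sdiff_of_subset h0s, h0c]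
  obtain ⟨P1, h1s, h1c⟩ := Finset.exists_subset_card_eq (show k ≤ (X \ P0).card by omega)
  have hc2 : ((X \ P0) \ P1).card = n - k - k := by rw [Finset.card_sdiff_of_subset h1s, h1c, hc1]
  obtain ⟨P2, h2s, h2c⟩ := Finset.exists_subset_card_eq (show k ≤ ((X \ P0) \ P1).card by omega)
  have hc3 : (((X \ P0) \ P1) \ P2).card = n - k - k - k := by
    rw [Finset.card_sdiff_of_subset h2s, h2c, hc2]
  obtain ⟨P3, h3s, h3c⟩ :=
    Finset.exists_subset_card_eq (show k ≤ (((X \ P0) \ P1) \ P2).card by omega)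
  set P4 := ((((X \ P0) \ P1) \ P2) \ P3) with hP4
  have hc4 : P4.card = n - k - k - k - k := by rw [hP4, Finset.card_sdiff_of_subset h3s, h3c, hc3]
  have hsub1 : P1 ⊆ X := h1s.trans Finset.sdiff_subset
  have hsub2 : P2 ⊆ X := h2s.trans (Finset.sdiff_subset.trans Finset.sdiff_subset)
  have hsub3 : P3 ⊆ X :=
    h3s.trans (Finset.sdiff_subset.trans (Finset.sdiff_subset.trans Finset.sdiff_subset))
  have hsub4 : P4 ⊆ X :=
    Finset.sdiff_subset.trans
      (Finset.sdiff_subset.trans (Finset.sdiff_subset.trans Finset.sdiff_subset))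
  refine ⟨![P0, P1, P2, P3, P4], ?_, ?_, ?_, ?_⟩
  · intro i
    fin_cases i
    · exact h0s
    · exact hsub1
    · exact hsub2
    · exact hsub3
    · exact hsub4
  · intro i
    have e0 : (n : ℝ) ≤ 6 * k := by exact_mod_cast Nat.cast_le.mpr (show n ≤ 6 * k by omega)
    have e4 : (n : ℝ) ≤ 6 * (n - k - k - k - k : ℕ) := by
      exact_mod_cast Nat.cast_le.mpr (show n ≤ 6 * (n - k - k - k - k) by omega)
    fin_cases i
    · show (n:ℝ) ≤ 6 * (P0.card : ℝ); rw [h0c]; exact e0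
    · show (n:ℝ) ≤ 6 * (P1.card : ℝ); rw [h1c]; exact e0
    · show (n:ℝ) ≤ 6 * (P2.card : ℝ); rw [h2c]; exact e0
    · show (n:ℝ) ≤ 6 * (P3.card : ℝ); rw [h3c]; exact e0
    · show (n:ℝ) ≤ 6 * (P4.card : ℝ); rw [hc4]; exact e4
  · intro x hx
    by_cases m0 : x ∈ P0
    · exact ⟨0, by simpa using m0⟩
    · have hx1 : x ∈ X \ P0 := Finset.mem_sdiff.mpr ⟨hx, m0⟩
      by_cases m1 : x ∈ P1
      · exact ⟨1, by simpa using m1⟩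
      · have hx2 : x ∈ (X \ P0) \ P1 := Finset.mem_sdiff.mpr ⟨hx1, m1⟩
        by_cases m2 : x ∈ P2
        · exact ⟨2, by simpa using m2⟩
        · have hx3 : x ∈ ((X \ P0) \ P1) \ P2 := Finset.mem_sdiff.mpr ⟨hx2, m2⟩
          by_cases m3 : x ∈ P3
          · exact ⟨3, by simpa using m3⟩
          · exact ⟨4, Finset.mem_sdiff.mpr ⟨hx3, m3⟩⟩
  · have d01 : Disjoint P0 P1 :=
      Finset.disjoint_of_subset_right h1s Finset.disjoint_sdiff
    have d02 : Disjoint P0 P2 :=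
      Finset.disjoint_of_subset_right (h2s.trans Finset.sdiff_subset) Finset.disjoint_sdiff
    have d03 : Disjoint P0 P3 :=
      Finset.disjoint_of_subset_right
        (h3s.trans (Finset.sdiff_subset.trans Finset.sdiff_subset)) Finset.disjoint_sdiff
    have d04 : Disjoint P0 P4 :=
      Finset.disjoint_of_subset_right
        (Finset.sdiff_subset.trans (Finset.sdiff_subset.trans Finset.sdiff_subset))
        Finset.disjoint_sdiff
    have d12 : Disjoint P1 P2 :=
      Finset.disjoint_of_subset_right h2s Finset.disjoint_sdiff
    have d13 : Disjoint P1 P3 :=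
      Finset.disjoint_of_subset_right (h3s.trans Finset.sdiff_subset) Finset.disjoint_sdiff
    have d14 : Disjoint P1 P4 :=
      Finset.disjoint_of_subset_right
        (Finset.sdiff_subset.trans Finset.sdiff_subset) Finset.disjoint_sdiff
    have d23 : Disjoint P2 P3 :=
      Finset.disjoint_of_subset_right h3s Finset.disjoint_sdiff
    have d24 : Disjoint P2 P4 :=
      Finset.disjoint_of_subset_right Finset.sdiff_subset Finset.disjoint_sdiff
    have d34 : Disjoint P3 P4 := Finset.disjoint_sdiff
    intro i j hij
    fin_cases i <;> fin_cases j <;>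
      first
        | (exact absurd rfl hij)
        | exact d01 | exact d02 | exact d03 | exact d04
        | exact d12 | exact d13 | exact d14
        | exact d23 | exact d24 | exact d34
        | (exact d01.symm) | (exact d02.symm) | (exact d03.symm) | (exact d04.symm)
        | (exact d12.symm) | (exact d13.symm) | (exact d14.symm)
        | (exact d23.symm) | (exact d24.symm) | (exact d34.symm)

lemma few_bad {V : Type*} [Fintype V] [DecidableEq V]
    (M : Matrix V V ℕ) (m d : ℕ) (γ : ℝ) (hγ : 0 < γ) (hd : 0 < d)
    (hexp : IsSpectralExpander M m d γ) (N : V → Finset V)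
    (hN : ∀ w, N w = Finset.univ.filter (fun u => 1 ≤ M w u))
    (X : Finset V) (h24 : 24 ≤ X.card) :
    ((Finset.univ.filter (fun w => ((N w) ∩ X).card ≤ 4)).card : ℝ)
      * X.card ≤ 30 * (γ ^ 2 * (m : ℝ) ^ 2) := by
  classical
  obtain ⟨P, hPsub, hPsize, hPcover, hPdisj⟩ := partition_five X h24
  set B : Fin 5 → Finset V := fun i => Finset.univ.filter (fun w => ∀ x ∈ P i, M w x = 0)
    with hB
  have hBbound : ∀ i, ((B i).card : ℝ) * (P i).card ≤ γ ^ 2 * (m : ℝ) ^ 2 := by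
    intro i
    apply zero_edge_bound M m d γ hγ hd hexp
    intro s hs t ht
    rw [hB] at hs
    simp only [Finset.mem_filter] at hs
    exact hs.2 t ht
  have hsub : Finset.univ.filter (fun w => ((N w) ∩ X).card ≤ 4) ⊆
      Finset.univ.biUnion B := by
    intro w hw
    rw [Finset.mem_filter] at hw
    rw [Finset.mem_biUnion]
    by_contra hcon
    push_neg at hcon
    have hpick : ∀ i : Fin 5, ∃ x, x ∈ (N w) ∩ (P i) := by
      intro i
      have := hcon i (Finset.mem_univ i)
      rw [hB] at this
      simp only [Finset.mem_filter, Finset.mem_univ, true_and, not_forall] at this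
      obtain ⟨x, hx, hMx⟩ := this
      refine ⟨x, Finset.mem_inter.mpr ⟨?_, hx⟩⟩
      rw [hN w]
      simp only [Finset.mem_filter, Finset.mem_univ, true_and]
      omega
    choose f hf using hpick
    have hinj : ∀ i ∈ (Finset.univ : Finset (Fin 5)), ∀ j ∈ (Finset.univ : Finset (Fin 5)),
        f i = f j → i = j := by
      intro i _ j _ hfe
      by_contra hne
      have h1 : f i ∈ P i := (Finset.mem_inter.mp (hf i)).2
      have h2 : f i ∈ P j := hfe ▸ (Finset.mem_inter.mp (hf j)).2
      exact Finset.disjoint_left.mp (hPdisj i j hne) h1 h2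
    have hmaps : ∀ i ∈ (Finset.univ : Finset (Fin 5)), f i ∈ (N w) ∩ X := by
      intro i _
      have h1 := Finset.mem_inter.mp (hf i)
      exact Finset.mem_inter.mpr ⟨h1.1, hPsub i h1.2⟩
    have := Finset.card_le_card_of_injOn f hmaps hinj
    simp only [Finset.card_univ, Fintype.card_fin] at this
    omega
  have hcard : ((Finset.univ.filter (fun w => ((N w) ∩ X).card ≤ 4)).card : ℝ)
      ≤ ∑ i : Fin 5, ((B i).card : ℝ) := by
    have h1 : (Finset.univ.filter (fun w => ((N w) ∩ X).card ≤ 4)).card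
        ≤ ∑ i : Fin 5, (B i).card :=
      (Finset.card_le_card hsub).trans (Finset.card_biUnion_le)
    exact_mod_cast h1
  calc ((Finset.univ.filter (fun w => ((N w) ∩ X).card ≤ 4)).card : ℝ) * X.card
      ≤ (∑ i : Fin 5, ((B i).card : ℝ)) * X.card := by
        apply mul_le_mul_of_nonneg_right hcard (Nat.cast_nonneg _)
    _ = ∑ i : Fin 5, ((B i).card : ℝ) * X.card := by rw [Finset.sum_mul]
    _ ≤ ∑ i : Fin 5, 6 * (((B i).card : ℝ) * (P i).card) := by
        apply Finset.sum_le_sum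
        intro i _
        calc ((B i).card : ℝ) * X.card ≤ ((B i).card : ℝ) * (6 * (P i).card) :=
              mul_le_mul_of_nonneg_left (hPsize i) (Nat.cast_nonneg _)
          _ = 6 * (((B i).card : ℝ) * (P i).card) := by ring
    _ ≤ ∑ _i : Fin 5, 6 * (γ ^ 2 * (m : ℝ) ^ 2) := by
        apply Finset.sum_le_sum
        intro i _
        have := hBbound i
        linarith
    _ = 30 * (γ ^ 2 * (m : ℝ) ^ 2) := by
        rw [Finset.sum_const]
        simp
        ring

/-- Let `G` be an `(m,d,γ)`-spectral expander on a finite vertex set `V`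
with `|V| = m`, in which any two distinct vertices `u, v` satisfy `|Γ(u) ∩ Γ(v)| ≤ 1`,
let `c : V → {0,1}` be a balanced coloring of `G`, and assume `m ≥ 1/γ²`. Then for every
`b ∈ {0,1}` there exists a `(1/10, ⌊2·log₂(1/γ)⌋ − 100)`-hitting distribution over the
`b`-monochromatic rectangles of the partial function `g(G,c)`. -/
theorem expander_gadget_hitting_distribution {V : Type*} [Fintype V] [DecidableEq V]
    (M : Matrix V V ℕ) (m d : ℕ) (γ : ℝ) (hγ : 0 < γ)
    (hexp : IsSpectralExpander M m d γ)
    (hone : ∀ u v : V, u ≠ v → (commonNeighbors M u v).card ≤ 1)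
    (c : V → Bool) (hbal : BalancedColoring c)
    (hm : 1 / γ ^ 2 ≤ (m : ℝ)) :
    ∀ b : Bool, ∃ μ : Finset V × Finset V → ℝ,
      IsDistribution μ ∧
      (∀ R, μ R ≠ 0 → MonoRectangle M c b R) ∧
      IsHitting μ (1 / 10) (⌊2 * Real.logb 2 (1 / γ)⌋ - 100) := by
  classical
  intro b
  obtain ⟨hcard, hreg, hH, hex, hbound⟩ := hexp
  by_cases hd : 0 < d
  case neg =>
    -- degenerate case: `d = 0`, hence `M = 0`, a single vertex, `γ ≥ 1`, vacuous hitting.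
    have hd0 : d = 0 := by omega
    have hM0 : ∀ v u, M v u = 0 := by
      intro v u
      have h1 := hreg v
      rw [hd0] at h1
      exact (Finset.sum_eq_zero_iff.mp h1) u (Finset.mem_univ u)
    have hA0 : M.map (Nat.cast : ℕ → ℝ) = 0 := by
      ext v u
      simp [Matrix.map_apply, hM0]
    have hev : ∀ i, hH.eigenvalues i = 0 := by
      intro i
      have hdiag := hH.conjStarAlgAut_star_eigenvectorUnitary
      have h0 : (Matrix.diagonal (RCLike.ofReal ∘ hH.eigenvalues) : Matrix V V ℝ) = 0 := by
        rw [← hdiag]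
        ext i' j'
        simp [Matrix.mul_apply, Matrix.map_apply, hM0]
      have h1 := congrFun (congrFun h0 i) i
      simpa using h1
    obtain ⟨i₀, hi₀, huniq⟩ := hex
    have hm1 : m = 1 := by
      rw [← hcard]
      rw [Fintype.card_eq_one_iff]
      refine ⟨i₀, fun j => huniq j ?_⟩
      show hH.eigenvalues j = (d : ℝ)
      rw [hev j, hd0]
      norm_num
    have hγ1 : 1 ≤ γ := by
      rw [hm1] at hm
      push_cast at hm
      have hγ2 : (0:ℝ) < γ ^ 2 := by positivity
      rw [div_le_one hγ2] at hm
      nlinarith [hm, hγ]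
    refine ⟨fun R => if R = ((∅, ∅) : Finset V × Finset V) then 1 else 0, ⟨?_, ?_⟩, ?_, ?_⟩
    · intro R
      dsimp only
      split <;> norm_num
    · rw [Finset.sum_ite_eq' Finset.univ ((∅, ∅) : Finset V × Finset V) (fun _ => (1:ℝ))]
      simp
    · intro R hR
      have hRe : R = ((∅, ∅) : Finset V × Finset V) := by
        by_contra hc
        simp only [if_neg hc] at hR
        exact hR rfl
      subst hRe
      intro u hu
      exact absurd hu (Finset.notMem_empty u)
    · intro X Y hX hY
      exfalso
      have hlog : Real.logb 2 (1 / γ) ≤ 0 :=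
        Real.logb_nonpos (by norm_num) (by positivity) (by rw [div_le_one hγ]; exact hγ1)
      have hfl : (⌊2 * Real.logb 2 (1 / γ)⌋ : ℤ) ≤ 0 := Int.floor_nonpos (by nlinarith [hlog])
      have hge : (100 : ℤ) ≤ -(⌊2 * Real.logb 2 (1 / γ)⌋ - 100) := by omega
      have h2 : (2:ℝ) ^ (100 : ℤ) ≤ (2:ℝ) ^ (-(⌊2 * Real.logb 2 (1 / γ)⌋ - 100)) :=
        zpow_le_zpow_right₀ (by norm_num) hge
      have h3 : ((2:ℝ) ^ (100 : ℤ)) = ((2:ℝ) ^ (100 : ℕ)) := by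
        rw [← zpow_natCast]
        norm_num
      have h4 : (X.card : ℝ) ≤ 1 := by
        have := Finset.card_le_univ X
        rw [hcard, hm1] at this
        exact_mod_cast this
      rw [hcard, hm1] at hX
      push_cast at hX
      rw [mul_one] at hX
      have h5 : (2:ℝ) ^ (100 : ℕ) ≥ 2 := by norm_num
      linarith [hX, h2, h4, h5, h3.symm.le, h3.le]
  case pos =>
    have hexp' : IsSpectralExpander M m d γ := ⟨hcard, hreg, hH, hex, hbound⟩
    set W : Finset V := Finset.univ.filter (fun v => c v = b) with hWdef
    have hmpos : 0 < m := by
      by_contra hc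
      have hm0 : m = 0 := by omega
      rw [hm0] at hm
      push_cast at hm
      have : (0:ℝ) < 1 / γ ^ 2 := by positivity
      linarith
    have hWn : m ≤ 3 * W.card := by
      have hsplit := Finset.card_filter_add_card_filter_not
        (s := (Finset.univ : Finset V)) (p := fun v => c v = true)
      rw [Finset.card_univ, hcard] at hsplit
      have hfneg : (Finset.univ.filter (fun v => ¬ (c v = true))).card
          = (Finset.univ.filter (fun v => c v = false)).card := by
        congr 1
        apply Finset.filter_congr
        intro v _
        simp [Bool.not_eq_true]
      cases b
      · -- b = false
        have h2 := hbal.2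
        rw [hcard] at h2
        rw [hWdef]
        omega
      · -- b = true
        have h1 := hbal.1
        rw [hcard] at h1
        rw [hWdef]
        omega
    have hWpos : 0 < W.card := by omega
    have hWne : ((W.card : ℝ)) ≠ 0 := by positivity
    set N : V → Finset V := fun w => Finset.univ.filter (fun u => 1 ≤ M w u) with hNdef
    refine ⟨fun R => (W.card : ℝ)⁻¹ * ∑ w ∈ W,
      (((N w).powerset.filter
          (fun A => ((A, N w \ A) : Finset V × Finset V) = R)).card : ℝ) / 2 ^ (N w).card,
      ⟨?_, ?_⟩, ?_, ?_⟩
    · -- nonneg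
      intro R
      apply mul_nonneg (by positivity)
      apply Finset.sum_nonneg
      intro w _
      positivity
    · -- sums to 1
      rw [← Finset.mul_sum, Finset.sum_comm]
      have hinner : ∀ w ∈ W, ∑ R : Finset V × Finset V,
          (((N w).powerset.filter
            (fun A => ((A, N w \ A) : Finset V × Finset V) = R)).card : ℝ) / 2 ^ (N w).card
          = 1 := by
        intro w _
        rw [← Finset.sum_div]
        have hfib : ∑ R : Finset V × Finset V,
            ((N w).powerset.filter
              (fun A => ((A, N w \ A) : Finset V × Finset V) = R)).card
            = (N w).powerset.card :=
          (Finset.card_eq_sum_card_fiberwise (fun A _ => Finset.mem_univ _)).symm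
        rw [← Nat.cast_sum, hfib, Finset.card_powerset]
        push_cast
        apply div_self
        positivity
      rw [Finset.sum_congr rfl hinner, Finset.sum_const, nsmul_eq_mul, mul_one,
        inv_mul_cancel₀ hWne]
    · -- support is monochromatic
      intro R hR
      have hsum : ∑ w ∈ W, (((N w).powerset.filter
          (fun A => ((A, N w \ A) : Finset V × Finset V) = R)).card : ℝ) / 2 ^ (N w).card ≠ 0 := by
        intro h0
        exact hR (by simp only [h0, mul_zero])
      obtain ⟨w, hwW, hw⟩ := Finset.exists_ne_zero_of_sum_ne_zero hsum
      have hcnt : ((N w).powerset.filter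
          (fun A => ((A, N w \ A) : Finset V × Finset V) = R)).card ≠ 0 := by
        intro h0
        rw [h0] at hw
        simp at hw
      obtain ⟨A, hA⟩ := Finset.card_pos.mp (Nat.pos_of_ne_zero hcnt)
      rw [Finset.mem_filter, Finset.mem_powerset] at hA
      obtain ⟨hAN, hAR⟩ := hA
      subst hAR
      intro u hu v hv
      have hvN : v ∈ N w := (Finset.mem_sdiff.mp hv).1
      have hvA : v ∉ A := (Finset.mem_sdiff.mp hv).2
      constructor
      · intro he
        exact hvA (he ▸ hu)
      · refine ⟨w, ?_, ?_⟩
        · rw [commonNeighbors, Finset.mem_filter]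
          refine ⟨Finset.mem_univ _, ?_, ?_⟩
          · have := hAN hu
            rw [hNdef] at this
            exact (Finset.mem_filter.mp this).2
          · have := hvN
            rw [hNdef] at this
            exact (Finset.mem_filter.mp this).2
        · rw [hWdef] at hwW
          exact (Finset.mem_filter.mp hwW).2
    · -- hitting
      intro X Y hX hY
      rw [hcard] at hX hY
      have hγ2 : (0:ℝ) < γ ^ 2 := by positivity
      have hgm : 1 ≤ (m:ℝ) * γ ^ 2 := by rwa [div_le_iff₀ hγ2] at hm
      -- 2^100 γ² m ≤ |X|, |Y|
      have hpow : (2:ℝ) ^ (100:ℕ) * γ ^ 2 ≤ (2:ℝ) ^ (-(⌊2 * Real.logb 2 (1/γ)⌋ - 100)) := by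
        have step1 : (2:ℝ) ^ (-(⌊2 * Real.logb 2 (1/γ)⌋ - 100))
            = (2:ℝ) ^ (100:ℤ) * (2:ℝ) ^ (-⌊2 * Real.logb 2 (1/γ)⌋) := by
          rw [← zpow_add₀ (two_ne_zero)]
          congr 1
          ring
        have e1 : ((2:ℝ) ^ ((-⌊2 * Real.logb 2 (1/γ)⌋ : ℤ) : ℝ))
            = (2:ℝ) ^ (-⌊2 * Real.logb 2 (1/γ)⌋ : ℤ) := Real.rpow_intCast 2 _
        have e2 : (2:ℝ) ^ (-(2 * Real.logb 2 (1/γ)) : ℝ)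
            ≤ (2:ℝ) ^ ((-⌊2 * Real.logb 2 (1/γ)⌋ : ℤ) : ℝ) := by
          apply (Real.rpow_le_rpow_left_iff (by norm_num : (1:ℝ) < 2)).mpr
          push_cast
          linarith [Int.floor_le (2 * Real.logb 2 (1/γ))]
        have e3 : (2:ℝ) ^ (-(2 * Real.logb 2 (1/γ)) : ℝ) = γ ^ 2 := by
          rw [show (-(2 * Real.logb 2 (1/γ)) : ℝ) = Real.logb 2 (1/γ) * (-2) by ring]
          rw [Real.rpow_mul (by norm_num : (0:ℝ) ≤ 2)]
          rw [Real.rpow_logb (by norm_num) (by norm_num) (by positivity)]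
          rw [show ((-2:ℝ)) = ((-2:ℤ) : ℝ) by norm_num, Real.rpow_intCast]
          rw [one_div, _root_.zpow_neg, _root_.inv_zpow, inv_inv]
          rw [show ((2:ℤ)) = ((2:ℕ) : ℤ) by norm_num, zpow_natCast]
        have e4 : γ ^ 2 ≤ (2:ℝ) ^ (-⌊2 * Real.logb 2 (1/γ)⌋ : ℤ) := by
          rw [← e1]
          rw [← e3]
          exact e2
        rw [step1]
        have e5 : ((2:ℝ) ^ (100:ℤ)) = ((2:ℝ) ^ (100:ℕ)) := by
          rw [← zpow_natCast]
          norm_num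
        rw [e5]
        exact mul_le_mul_of_nonneg_left e4 (by positivity)
      have hXlow : (2:ℝ) ^ (100:ℕ) * γ ^ 2 * m ≤ X.card :=
        le_trans (mul_le_mul_of_nonneg_right hpow (Nat.cast_nonneg m)) hX
      have hYlow : (2:ℝ) ^ (100:ℕ) * γ ^ 2 * m ≤ Y.card :=
        le_trans (mul_le_mul_of_nonneg_right hpow (Nat.cast_nonneg m)) hY
      have hbignum : (18000:ℝ) ≤ 2 ^ (100:ℕ) := by norm_num
      have h24X : 24 ≤ X.card := by
        have h1 : (2:ℝ) ^ (100:ℕ) * 1 ≤ (2:ℝ) ^ (100:ℕ) * ((m:ℝ) * γ ^ 2) :=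
          mul_le_mul_of_nonneg_left hgm (by positivity)
        have : (24:ℝ) ≤ (X.card : ℝ) := by nlinarith [hXlow, h1, hbignum]
        exact_mod_cast this
      have h24Y : 24 ≤ Y.card := by
        have h1 : (2:ℝ) ^ (100:ℕ) * 1 ≤ (2:ℝ) ^ (100:ℕ) * ((m:ℝ) * γ ^ 2) :=
          mul_le_mul_of_nonneg_left hgm (by positivity)
        have : (24:ℝ) ≤ (Y.card : ℝ) := by nlinarith [hYlow, h1, hbignum]
        exact_mod_cast this
      have hNfact : ∀ w, N w = Finset.univ.filter (fun u => 1 ≤ M w u) := fun w => by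
        rw [hNdef]
      have hbadX := few_bad M m d γ hγ hd hexp' N hNfact X h24X
      have hbadY := few_bad M m d γ hγ hd hexp' N hNfact Y h24Y
      set bXn := (Finset.univ.filter (fun w => ((N w) ∩ X).card ≤ 4)).card with hbXn
      set bYn := (Finset.univ.filter (fun w => ((N w) ∩ Y).card ≤ 4)).card with hbYn
      have hm0 : (0:ℝ) < m := by exact_mod_cast hmpos
      have hW3 : (m:ℝ) ≤ 3 * W.card := by exact_mod_cast hWn
      have hbX : (bXn : ℝ) * 18000 ≤ 90 * W.card := by
        have s1 : (bXn:ℝ) * ((2:ℝ) ^ (100:ℕ) * γ ^ 2 * m) ≤ 30 * (γ ^ 2 * (m:ℝ) ^ 2) :=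
          le_trans (mul_le_mul_of_nonneg_left hXlow (Nat.cast_nonneg _)) hbadX
        have s2 : (bXn:ℝ) * (2:ℝ) ^ (100:ℕ) * m ≤ 30 * (m:ℝ) ^ 2 := by
          have e1 : (bXn:ℝ) * ((2:ℝ) ^ (100:ℕ) * γ ^ 2 * m)
              = γ ^ 2 * ((bXn:ℝ) * 2 ^ (100:ℕ) * m) := by ring
          have e2 : 30 * (γ ^ 2 * (m:ℝ) ^ 2) = γ ^ 2 * (30 * (m:ℝ) ^ 2) := by ring
          rw [e1, e2] at s1
          exact le_of_mul_le_mul_left s1 hγ2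
        have s3 : (bXn:ℝ) * (2:ℝ) ^ (100:ℕ) ≤ 30 * m := by
          have e2 : 30 * (m:ℝ) ^ 2 = (30 * m) * m := by ring
          rw [e2] at s2
          exact le_of_mul_le_mul_right s2 hm0
        have s5 : (bXn:ℝ) * 18000 ≤ (bXn:ℝ) * 2 ^ (100:ℕ) :=
          mul_le_mul_of_nonneg_left hbignum (Nat.cast_nonneg _)
        linarith
      have hbY : (bYn : ℝ) * 18000 ≤ 90 * W.card := by
        have s1 : (bYn:ℝ) * ((2:ℝ) ^ (100:ℕ) * γ ^ 2 * m) ≤ 30 * (γ ^ 2 * (m:ℝ) ^ 2) :=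
          le_trans (mul_le_mul_of_nonneg_left hYlow (Nat.cast_nonneg _)) hbadY
        have s2 : (bYn:ℝ) * (2:ℝ) ^ (100:ℕ) * m ≤ 30 * (m:ℝ) ^ 2 := by
          have e1 : (bYn:ℝ) * ((2:ℝ) ^ (100:ℕ) * γ ^ 2 * m)
              = γ ^ 2 * ((bYn:ℝ) * 2 ^ (100:ℕ) * m) := by ring
          have e2 : 30 * (γ ^ 2 * (m:ℝ) ^ 2) = γ ^ 2 * (30 * (m:ℝ) ^ 2) := by ring
          rw [e1, e2] at s1
          exact le_of_mul_le_mul_left s1 hγ2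
        have s3 : (bYn:ℝ) * (2:ℝ) ^ (100:ℕ) ≤ 30 * m := by
          have e2 : 30 * (m:ℝ) ^ 2 = (30 * m) * m := by ring
          rw [e2] at s2
          exact le_of_mul_le_mul_right s2 hm0
        have s5 : (bYn:ℝ) * 18000 ≤ (bYn:ℝ) * 2 ^ (100:ℕ) :=
          mul_le_mul_of_nonneg_left hbignum (Nat.cast_nonneg _)
        linarith
      -- the good set
      set G := W.filter (fun w => 5 ≤ ((N w) ∩ X).card ∧ 5 ≤ ((N w) ∩ Y).card) with hGdef
      have hGsub : G ⊆ W := Finset.filter_subset _ _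
      have hWG : (W.card : ℝ) ≤ G.card + bXn + bYn := by
        have hsub : W \ G ⊆ (Finset.univ.filter (fun w => ((N w) ∩ X).card ≤ 4)) ∪
            (Finset.univ.filter (fun w => ((N w) ∩ Y).card ≤ 4)) := by
          intro w hw
          rw [Finset.mem_sdiff] at hw
          have h1 : ¬ (5 ≤ ((N w) ∩ X).card ∧ 5 ≤ ((N w) ∩ Y).card) := fun hcc =>
            hw.2 (by rw [hGdef]; exact Finset.mem_filter.mpr ⟨hw.1, hcc⟩)
          rw [Finset.mem_union, Finset.mem_filter, Finset.mem_filter]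
          rcases not_and_or.mp h1 with h | h
          · left; exact ⟨Finset.mem_univ _, by omega⟩
          · right; exact ⟨Finset.mem_univ _, by omega⟩
        have hcards : W.card - G.card ≤ bXn + bYn := by
          calc W.card - G.card = (W \ G).card := (Finset.card_sdiff_of_subset hGsub).symm
            _ ≤ _ := (Finset.card_le_card hsub).trans (Finset.card_union_le _ _)
        have hGW : G.card ≤ W.card := Finset.card_le_card hGsub
        have : W.card ≤ G.card + (bXn + bYn) := by omega
        have hcast : (W.card:ℝ) ≤ ((G.card + (bXn + bYn) : ℕ) : ℝ) := by exact_mod_cast this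
        push_cast at hcast
        linarith
      -- rewrite the hitting probability
      have hswap : hitProb (fun R => (W.card : ℝ)⁻¹ * ∑ w ∈ W,
          (((N w).powerset.filter
            (fun A => ((A, N w \ A) : Finset V × Finset V) = R)).card : ℝ) / 2 ^ (N w).card) X Y
          = (W.card:ℝ)⁻¹ * ∑ w ∈ W,
            ((((N w).powerset.filter
              (fun A => (A ∩ X).Nonempty ∧ ((N w \ A) ∩ Y).Nonempty)).card : ℝ)
              / 2 ^ (N w).card) := by
        unfold hitProb
        rw [← Finset.mul_sum]
        congr 1
        rw [Finset.sum_comm]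
        apply Finset.sum_congr rfl
        intro w _
        rw [← Finset.sum_div]
        congr 1
        rw [← Nat.cast_sum]
        rw [sum_fiber_card (N w).powerset (fun A => ((A, N w \ A) : Finset V × Finset V))
          (fun R : Finset V × Finset V => (R.1 ∩ X).Nonempty ∧ (R.2 ∩ Y).Nonempty)]
      rw [hswap]
      have hterm : ∀ w ∈ G, (15:ℝ)/16 ≤ (((N w).powerset.filter
          (fun A => (A ∩ X).Nonempty ∧ ((N w \ A) ∩ Y).Nonempty)).card : ℝ) / 2 ^ (N w).card := by
        intro w hw
        rw [hGdef, Finset.mem_filter] at hw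
        obtain ⟨-, h5X, h5Y⟩ := hw
        rw [le_div_iff₀ (by positivity : (0:ℝ) < 2 ^ (N w).card)]
        exact success_count (N w) X Y h5X h5Y
      have hsum_lower : (G.card : ℝ) * (15/16) ≤ ∑ w ∈ W,
          ((((N w).powerset.filter
            (fun A => (A ∩ X).Nonempty ∧ ((N w \ A) ∩ Y).Nonempty)).card : ℝ)
            / 2 ^ (N w).card) := by
        calc (G.card : ℝ) * (15/16) = ∑ _w ∈ G, (15:ℝ)/16 := by
              rw [Finset.sum_const, nsmul_eq_mul]
          _ ≤ ∑ w ∈ G, ((((N w).powerset.filter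
              (fun A => (A ∩ X).Nonempty ∧ ((N w \ A) ∩ Y).Nonempty)).card : ℝ)
              / 2 ^ (N w).card) := Finset.sum_le_sum hterm
          _ ≤ _ := Finset.sum_le_sum_of_subset_of_nonneg hGsub (fun w _ _ => by positivity)
      have hωpos : (0:ℝ) < W.card := by exact_mod_cast hWpos
      rw [inv_mul_eq_div, le_div_iff₀ hωpos]
      linarith [hsum_lower, hWG, hbX, hbY]
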